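/- arXiv:0905.2674 — 2 statements merged into one kernel-verified Lean document; each statement's English description precedes it below -/
import Mathlib

section
/- Let G be a finite group that contains a normal subgroup A such that C_G(A) ≤ A and such that [A, x] is contained in the center Z(A) of A for every small element x of G. Then M(G) is nilpotent of nilpotency class at most 3. -/
/-- The size of the conjugacy class of `x` in `G`. -/
noncomputable def classCard {G : Type*} [Group G] (x : G) : ℕ := Nat.card (conjugatesOf x)

/-- An element `x` is *small* if its conjugacy class size is among the two smallest
conjugacy class sizes of `G`, i.e. at most one conjugacy class size is strictly
smaller than that of `x`. -/
def IsSmall {G : Type*} [Group G] (x : G) : Prop :=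
  {n : ℕ | (∃ g : G, classCard g = n) ∧ n < classCard x}.Subsingleton

/-- `M G` is the subgroup generated by all small elements of `G`. -/
def smallGen (G : Type*) [Group G] : Subgroup G := Subgroup.closure {x : G | IsSmall x}

/-- `[x, K] = {x⁻¹k⁻¹xk : k ∈ K}`. -/
def commSet {G : Type*} [Group G] (x : G) (K : Set G) : Set G :=
  {y | ∃ k ∈ K, y = x⁻¹ * k⁻¹ * x * k}

/-- `[A, x] = {a⁻¹x⁻¹ax : a ∈ A}`. -/
def commSet' {G : Type*} [Group G] (A : Set G) (x : G) : Set G :=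
  {y | ∃ a ∈ A, y = a⁻¹ * x⁻¹ * a * x}

/-- `S` is a normal subset of `K`: `k⁻¹Sk = S` for all `k ∈ K`. -/
def IsNormalSubsetOf {G : Type*} [Group G] (S K : Set G) : Prop :=
  ∀ k ∈ K, (fun s => k⁻¹ * s * k) '' S = S

/-- The Fitting subgroup: the join of all nilpotent normal subgroups (for a finite
group, its largest nilpotent normal subgroup). -/
def fittingSubgroup (G : Type*) [Group G] : Subgroup G :=
  ⨆ H ∈ {H : Subgroup G | H.Normal ∧ Group.IsNilpotent ↥H}, H

open scoped commutatorElement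

section Auxiliary

variable {G : Type*} [Group G]

theorem classCard_eq_index (x : G) : classCard x = (Subgroup.centralizer {x}).index := by
  have h1 : conjugatesOf x = MulAction.orbit (ConjAct G) x := by
    ext y
    rw [ConjAct.mem_orbit_conjAct]
    exact ⟨fun h => h.symm, fun h => h.symm⟩
  rw [classCard, h1, Nat.card_congr (MulAction.orbitEquivQuotientStabilizer (ConjAct G) x),
    Subgroup.centralizer_eq_comap_stabilizer]
  exact (Subgroup.index_comap_of_surjective _ ConjAct.toConjAct.surjective).symm

theorem classCard_eq_one_iff (u : G) : classCard u = 1 ↔ u ∈ Subgroup.center G := by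
  rw [classCard_eq_index, Subgroup.index_eq_one, Subgroup.centralizer_eq_top_iff_subset,
    Set.singleton_subset_iff]
  rfl

theorem classCard_ne_zero [Finite G] (u : G) : classCard u ≠ 0 := by
  rw [classCard_eq_index]
  exact Subgroup.index_ne_zero_of_finite

/-- For a small noncentral `x`, every noncentral element has class at least as big. -/
theorem IsSmall.le_classCard [Finite G] {x : G} (hx : IsSmall x)
    (hxc : x ∉ Subgroup.center G) {u : G} (huc : u ∉ Subgroup.center G) :
    classCard x ≤ classCard u := by
  by_contra hlt
  push_neg at hlt
  have h1x : 1 < classCard x := by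
    rcases Nat.lt_or_ge 1 (classCard x) with h | h
    · exact h
    · interval_cases h' : classCard x
      · exact absurd h' (classCard_ne_zero x)
      · exact absurd ((classCard_eq_one_iff x).mp h') hxc
  have m1 : (1 : ℕ) ∈ {n : ℕ | (∃ g : G, classCard g = n) ∧ n < classCard x} :=
    ⟨⟨1, (classCard_eq_one_iff 1).mpr (Subgroup.center G).one_mem⟩, h1x⟩
  have m2 : classCard u ∈ {n : ℕ | (∃ g : G, classCard g = n) ∧ n < classCard x} :=
    ⟨⟨u, rfl⟩, hlt⟩
  exact huc ((classCard_eq_one_iff u).mp (hx m2 m1))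

/-- The centralizer of a normal subgroup is normal. -/
theorem centralizer_normal_aux (A : Subgroup G) (hA : A.Normal) :
    (Subgroup.centralizer (A : Set G)).Normal := by
  constructor
  intro n hn g
  rw [Subgroup.mem_centralizer_iff] at hn ⊢
  intro h hh
  have h1 : g⁻¹ * h * g ∈ (A : Set G) := by
    simpa using hA.conj_mem' h hh g
  have h2 := hn _ h1
  have h3 : g * ((g⁻¹ * h * g) * n) * g⁻¹ = g * (n * (g⁻¹ * h * g)) * g⁻¹ := by rw [h2]
  calc h * (g * n * g⁻¹) = g * ((g⁻¹ * h * g) * n) * g⁻¹ := by group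
    _ = g * (n * (g⁻¹ * h * g)) * g⁻¹ := h3
    _ = g * n * g⁻¹ * h := by group

theorem commutator_mem_of_normal {A : Subgroup G} (hA : A.Normal) (b : ↥A) (x : G) :
    ⁅(b : G), x⁆ ∈ A := by
  have h : ⁅(b : G), x⁆ = (b : G) * (x * (b : G)⁻¹ * x⁻¹) := by group
  rw [h]
  exact mul_mem b.2 (hA.conj_mem _ (inv_mem b.2) x)

/-- The commutator-with-`x` map as a homomorphism `A →* G`, when all commutators
`[A,x]` centralize `A`. -/
def commHom (A : Subgroup G) (x : G) (hA : A.Normal)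
    (hN : ∀ b ∈ A, ⁅b, x⁆ ∈ Subgroup.centralizer (A : Set G)) : ↥A →* G where
  toFun b := ⁅(b : G), x⁆
  map_one' := by simp
  map_mul' := by
    intro b c
    have h1 : (b : G) * ⁅(c : G), x⁆ = ⁅(c : G), x⁆ * (b : G) :=
      Subgroup.mem_centralizer_iff.mp (hN _ c.2) (b : G) b.2
    have h2 : ⁅(b:G),x⁆ * ⁅(c:G),x⁆ = ⁅(c:G),x⁆ * ⁅(b:G),x⁆ :=
      Subgroup.mem_centralizer_iff.mp (hN _ c.2) _ (commutator_mem_of_normal hA b x)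
    show ⁅((b * c : ↥A) : G), x⁆ = ⁅(b:G),x⁆ * ⁅(c:G),x⁆
    push_cast
    calc ⁅(b:G)*(c:G), x⁆ = (b:G) * ⁅(c:G),x⁆ * (b:G)⁻¹ * ⁅(b:G),x⁆ := by group
      _ = ⁅(c:G),x⁆ * ⁅(b:G),x⁆ := by rw [h1]; group
      _ = ⁅(b:G),x⁆ * ⁅(c:G),x⁆ := h2.symm

@[simp] theorem commHom_apply (A : Subgroup G) (x : G) (hA : A.Normal)
    (hN : ∀ b ∈ A, ⁅b, x⁆ ∈ Subgroup.centralizer (A : Set G)) (b : ↥A) :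
    commHom A x hA hN b = ⁅(b : G), x⁆ := rfl

/-- Key counting lemma: if `x` has (one of the two) smallest class sizes and all
commutators `[A,x]` centralize the normal subgroup `A`, then `[A,x] ⊆ Z(G)`. -/
theorem key_lemma [Finite G] (A : Subgroup G) (hA : A.Normal) (x : G)
    (hsmall : ∀ u : G, u ∉ Subgroup.center G →
      (Subgroup.centralizer {x}).index ≤ (Subgroup.centralizer {u}).index)
    (hN : ∀ b ∈ A, ⁅b, x⁆ ∈ Subgroup.centralizer (A : Set G)) :
    ∀ a ∈ A, ⁅a, x⁆ ∈ Subgroup.center G := by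
  intro a ha
  by_contra hu
  set u := ⁅a, x⁆ with hudef
  set Cx := Subgroup.centralizer ({x} : Set G) with hCxdef
  set Cu := Subgroup.centralizer ({u} : Set G) with hCudef
  set φ := commHom A x hA hN with hφdef
  set U := φ.range with hUdef
  -- A centralizes u
  have hACu : A ≤ Cu := by
    intro b hb
    rw [hCudef, Subgroup.mem_centralizer_singleton_iff]
    exact Subgroup.mem_centralizer_iff.mp (hN a ha) b hb
  set D := Cx ⊓ Cu with hDdef
  set E := D ⊔ A with hEdef
  have hECu : E ≤ Cu := sup_le inf_le_right hACu
  -- index comparison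
  have hidx : Cx.index ≤ E.index := by
    refine le_trans (hsmall u hu) ?_
    exact Nat.le_of_dvd (Nat.pos_of_ne_zero Subgroup.index_ne_zero_of_finite)
      (Subgroup.index_dvd_of_le hECu)
  have hcardE : Nat.card ↥E ≤ Nat.card ↥Cx := by
    have h1 : Nat.card ↥E * E.index = Nat.card ↥Cx * Cx.index := by
      rw [Subgroup.card_mul_index, Subgroup.card_mul_index]
    have h2 : Nat.card ↥E * Cx.index ≤ Nat.card ↥Cx * Cx.index := by
      calc Nat.card ↥E * Cx.index ≤ Nat.card ↥E * E.index :=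
            Nat.mul_le_mul_left _ hidx
        _ = Nat.card ↥Cx * Cx.index := h1
    exact Nat.le_of_mul_le_mul_right h2
      (Nat.pos_of_ne_zero Subgroup.index_ne_zero_of_finite)
  -- second isomorphism theorem cards
  set q := Nat.card (↥D ⧸ A.subgroupOf D) with hqdef
  have hq : Nat.card (↥E ⧸ A.subgroupOf E) = q := by
    rw [hqdef]
    exact (Nat.card_congr (QuotientGroup.quotientInfEquivProdNormalQuotient D A).toEquiv).symm
  set k := Nat.card ↥(A.subgroupOf D) with hkdef
  have hcardD : Nat.card ↥D = q * k :=
    Subgroup.card_eq_card_quotient_mul_card_subgroup (A.subgroupOf D)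
  have hcardE2 : Nat.card ↥E = q * Nat.card ↥A := by
    rw [Subgroup.card_eq_card_quotient_mul_card_subgroup (A.subgroupOf E), hq]
    congr 1
    exact Nat.card_congr (Subgroup.subgroupOfEquivOfLe le_sup_right).toEquiv
  -- card A = card U * k
  have hkerk : Nat.card ↥φ.ker = k := by
    rw [hkdef]
    refine Nat.card_congr ⟨fun b => ⟨⟨((b : ↥A) : G), ?_⟩, (b : ↥A).2⟩,
      fun d => ⟨⟨((d : ↥D) : G), d.2⟩, ?_⟩, fun b => by ext; rfl, fun d => by ext; rfl⟩
    · have hb1 : ⁅(((b : ↥A)) : G), x⁆ = 1 := b.2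
      have hbx : ((b : ↥A) : G) ∈ Cx := by
        rw [hCxdef, Subgroup.mem_centralizer_singleton_iff]
        exact commutatorElement_eq_one_iff_commute.mp hb1
      exact ⟨hbx, hACu (b : ↥A).2⟩
    · show φ _ = 1
      rw [hφdef, commHom_apply]
      exact commutatorElement_eq_one_iff_commute.mpr
        (Subgroup.mem_centralizer_singleton_iff.mp (d : ↥D).2.1)
  have hcardA : Nat.card ↥A = Nat.card ↥U * k := by
    rw [← hkerk, Subgroup.card_eq_card_quotient_mul_card_subgroup φ.ker]
    congr 1
    exact Nat.card_congr (QuotientGroup.quotientKerEquivRange φ).toEquiv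
  -- r = number of Cx-conjugates of u
  set r := Nat.card (↥Cx ⧸ D.subgroupOf Cx) with hrdef
  have hcardCx : Nat.card ↥Cx = r * Nat.card ↥D := by
    rw [Subgroup.card_eq_card_quotient_mul_card_subgroup (D.subgroupOf Cx)]
    congr 1
    exact Nat.card_congr (Subgroup.subgroupOfEquivOfLe inf_le_left).toEquiv
  -- combine: card U ≤ r
  have hUr : Nat.card ↥U ≤ r := by
    have h1 : q * (Nat.card ↥U * k) ≤ r * (q * k) := by
      rw [← hcardA, ← hcardE2, ← hcardD]
      calc Nat.card ↥E ≤ Nat.card ↥Cx := hcardE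
        _ = r * Nat.card ↥D := hcardCx
    have hq0 : 0 < q := Nat.card_pos
    have hk0 : 0 < k := Nat.card_pos
    have h2 : Nat.card ↥U * (q * k) ≤ r * (q * k) := by
      calc Nat.card ↥U * (q * k) = q * (Nat.card ↥U * k) := by ring
        _ ≤ r * (q * k) := h1
    exact Nat.le_of_mul_le_mul_right h2 (Nat.mul_pos hq0 hk0)
  -- injection of the quotient into U \ {1}
  have horb : ∀ c : ↥Cx, ((c:G) * u * (c:G)⁻¹) ∈ (U : Set G) \ {1} := by
    intro c
    have hcx1 : (c : G) * x = x * (c : G) := Subgroup.mem_centralizer_singleton_iff.mp c.2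
    have hcx : (c:G) * x * (c:G)⁻¹ = x := by rw [hcx1]; group
    constructor
    · refine ⟨⟨(c:G) * a * (c:G)⁻¹, hA.conj_mem a ha (c:G)⟩, ?_⟩
      show ⁅(c:G) * a * (c:G)⁻¹, x⁆ = (c:G) * u * (c:G)⁻¹
      calc ⁅(c:G)*a*(c:G)⁻¹, x⁆ = ⁅(c:G)*a*(c:G)⁻¹, (c:G)*x*(c:G)⁻¹⁆ := by rw [hcx]
        _ = (c:G) * ⁅a, x⁆ * (c:G)⁻¹ := by group
    · intro h1
      apply hu
      have h2 : (c:G) * u * (c:G)⁻¹ = 1 := h1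
      have h3 : u = (c:G)⁻¹ * ((c:G) * u * (c:G)⁻¹) * (c:G) := by group
      rw [h2] at h3
      have h4 : u = 1 := by rw [h3]; group
      rw [h4]
      exact one_mem _
  have hUru : r ≤ Nat.card ↥U - 1 := by
    set f : ↥Cx → ↥((U : Set G) \ {1}) := fun c => ⟨(c:G) * u * (c:G)⁻¹, horb c⟩ with hfdef
    have hresp : ∀ c₁ c₂ : ↥Cx, QuotientGroup.leftRel (D.subgroupOf Cx) c₁ c₂ → f c₁ = f c₂ := by
      intro c₁ c₂ hrel
      rw [QuotientGroup.leftRel_apply] at hrel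
      have hmem : ((c₁⁻¹ * c₂ : ↥Cx) : G) ∈ Cu := (Subgroup.mem_subgroupOf.mp hrel).2
      have hco : ((c₁⁻¹ * c₂ : ↥Cx) : G) * u = u * ((c₁⁻¹ * c₂ : ↥Cx) : G) :=
        Subgroup.mem_centralizer_singleton_iff.mp hmem
      apply Subtype.ext
      show (c₁:G) * u * (c₁:G)⁻¹ = (c₂:G) * u * (c₂:G)⁻¹
      have hco' : ((c₁:G)⁻¹ * (c₂:G)) * u = u * ((c₁:G)⁻¹ * (c₂:G)) := hco
      calc (c₁:G) * u * (c₁:G)⁻¹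
          = (c₁:G) * (u * ((c₁:G)⁻¹ * (c₂:G))) * (c₂:G)⁻¹ := by group
        _ = (c₁:G) * (((c₁:G)⁻¹ * (c₂:G)) * u) * (c₂:G)⁻¹ := by rw [hco']
        _ = (c₂:G) * u * (c₂:G)⁻¹ := by group
    set F : (↥Cx ⧸ D.subgroupOf Cx) → ↥((U : Set G) \ {1}) :=
      fun z => Quotient.liftOn' z f hresp with hFdef
    have hFinj : Function.Injective F := by
      intro z₁ z₂ h
      induction z₁ using Quotient.inductionOn'
      induction z₂ using Quotient.inductionOn'
      rename_i c₁ c₂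
      have h1 : (c₁:G) * u * (c₁:G)⁻¹ = (c₂:G) * u * (c₂:G)⁻¹ := by
        have := Subtype.ext_iff.mp h
        exact this
      apply Quotient.sound'
      have hrel : ((c₁⁻¹ * c₂ : ↥Cx) : G) ∈ D := by
        rw [hDdef, Subgroup.mem_inf]
        refine ⟨(c₁⁻¹ * c₂ : ↥Cx).2, ?_⟩
        rw [hCudef, Subgroup.mem_centralizer_singleton_iff]
        show ((c₁:G)⁻¹ * (c₂:G)) * u = u * ((c₁:G)⁻¹ * (c₂:G))
        calc ((c₁:G)⁻¹ * (c₂:G)) * u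
            = (c₁:G)⁻¹ * ((c₂:G) * u * (c₂:G)⁻¹) * (c₂:G) := by group
          _ = (c₁:G)⁻¹ * ((c₁:G) * u * (c₁:G)⁻¹) * (c₂:G) := by rw [h1]
          _ = u * ((c₁:G)⁻¹ * (c₂:G)) := by group
      exact QuotientGroup.leftRel_apply.mpr (Subgroup.mem_subgroupOf.mpr hrel)
    have hrle : r ≤ Nat.card ↥((U : Set G) \ {1}) :=
      Nat.card_le_card_of_injective F hFinj
    have hcards : Nat.card ↥((U : Set G) \ {1}) = Nat.card ↥U - 1 := by
      rw [Nat.card_coe_set_eq, Set.ncard_diff_singleton_of_mem U.one_mem,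
        ← Nat.card_coe_set_eq]
      rfl
    rw [hcards] at hrle
    exact hrle
  have hU1 : 0 < Nat.card ↥U := Nat.card_pos
  omega

/-- If `[a,s]` and `[a,t]` are central for all `a ∈ A`, then `[s,t]` centralizes `A`. -/
theorem conj_comm_of_key (A : Subgroup G) (hA : A.Normal) {s t : G}
    (hks : ∀ a ∈ A, ⁅a, s⁆ ∈ Subgroup.center G)
    (hkt : ∀ a ∈ A, ⁅a, t⁆ ∈ Subgroup.center G) :
    ∀ b ∈ A, b * ⁅s, t⁆ = ⁅s, t⁆ * b := by
  have hcen : ∀ z ∈ Subgroup.center G, ∀ g h : G, g * (z * h) = z * (g * h) := by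
    intro z hz g h
    rw [← mul_assoc, Subgroup.mem_center_iff.mp hz g, mul_assoc]
  have hz : ∀ (y : G), (∀ a ∈ A, ⁅a, y⁆ ∈ Subgroup.center G) →
      ∀ c ∈ A, y * c * y⁻¹ = ⁅y, c⁆ * c ∧ ⁅y, c⁆ ∈ Subgroup.center G := by
    intro y hky c hc
    refine ⟨by group, ?_⟩
    have h1 : ⁅y, c⁆ = ⁅c, y⁆⁻¹ := by group
    rw [h1]
    exact inv_mem (hky c hc)
  have H1 : ∀ c ∈ A, s * (t * c * t⁻¹) * s⁻¹ = t * (s * c * s⁻¹) * t⁻¹ := by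
    intro c hc
    obtain ⟨htc, hzt⟩ := hz t hkt c hc
    obtain ⟨hsc, hzs⟩ := hz s hks c hc
    have eL : s * (t * c * t⁻¹) * s⁻¹ = ⁅s, c⁆ * (⁅t, c⁆ * c) :=
      calc s * (t * c * t⁻¹) * s⁻¹ = s * (⁅t,c⁆ * c) * s⁻¹ := by rw [htc]
        _ = ⁅t,c⁆ * (s * c * s⁻¹) := by rw [hcen _ hzt s c, mul_assoc]
        _ = ⁅t,c⁆ * (⁅s,c⁆ * c) := by rw [hsc]
        _ = ⁅s,c⁆ * (⁅t,c⁆ * c) := by rw [hcen _ hzs ⁅t,c⁆ c]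
    have eR : t * (s * c * s⁻¹) * t⁻¹ = ⁅s, c⁆ * (⁅t, c⁆ * c) :=
      calc t * (s * c * s⁻¹) * t⁻¹ = t * (⁅s,c⁆ * c) * t⁻¹ := by rw [hsc]
        _ = ⁅s,c⁆ * (t * c * t⁻¹) := by rw [hcen _ hzs t c, mul_assoc]
        _ = ⁅s,c⁆ * (⁅t,c⁆ * c) := by rw [htc]
    exact eL.trans eR.symm
  intro b hb
  have hb1 : t⁻¹ * b * t ∈ A := by
    have := hA.conj_mem b hb t⁻¹
    simpa using this
  have hb2 : s⁻¹ * (t⁻¹ * b * t) * s ∈ A := by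
    have := hA.conj_mem _ hb1 s⁻¹
    simpa using this
  have key := H1 _ hb2
  have key2 : ⁅s,t⁆ * b * ⁅s,t⁆⁻¹ = b := by
    calc ⁅s,t⁆ * b * ⁅s,t⁆⁻¹
        = s * (t * (s⁻¹ * (t⁻¹ * b * t) * s) * t⁻¹) * s⁻¹ := by group
      _ = t * (s * (s⁻¹ * (t⁻¹ * b * t) * s) * s⁻¹) * t⁻¹ := key
      _ = b := by group
  calc b * ⁅s,t⁆ = (⁅s,t⁆ * b * ⁅s,t⁆⁻¹) * ⁅s,t⁆ := by rw [key2]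
    _ = ⁅s,t⁆ * b := by group

end Auxiliary

/-- If a finite group `G` has a normal subgroup `A` with `C_G(A) ≤ A` such that
`[A, x] ⊆ Z(A)` for every small element `x` of `G`, then `M(G)` is nilpotent of
class at most `3`. -/
theorem stmt_1 {G : Type*} [Group G] [Finite G] (A : Subgroup G) (hA : A.Normal)
    (hC : Subgroup.centralizer (A : Set G) ≤ A)
    (hZ : ∀ x : G, IsSmall x →
      commSet' (A : Set G) x ⊆ ((Subgroup.center ↥A).map A.subtype : Set G)) :
    Group.IsNilpotent ↥(smallGen G) ∧ (⊤ : Subgroup ↥(smallGen G)).lowerCentralSeries 3 = ⊥ := by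
  classical
  set N := Subgroup.centralizer (A : Set G) with hNdef
  have hNnormal : N.Normal := centralizer_normal_aux A hA
  set S := {x : G | IsSmall x} with hSdef
  set M := smallGen G with hMdef
  have hMS : M = Subgroup.closure S := rfl
  -- [A, x] centralizes A for small x
  have hN : ∀ x ∈ S, ∀ b ∈ A, ⁅b, x⁆ ∈ N := by
    intro x hx b hb
    have hmap : ((Subgroup.center ↥A).map A.subtype : Set G) ⊆ (N : Set G) := by
      rintro g ⟨z, hz, rfl⟩
      rw [SetLike.mem_coe, hNdef, Subgroup.mem_centralizer_iff]
      intro h hh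
      have h1 := Subgroup.mem_center_iff.mp hz ⟨h, hh⟩
      exact congrArg Subtype.val h1
    have h1 : ∀ c ∈ A, c⁻¹ * x⁻¹ * c * x ∈ N := by
      intro c hc
      exact hmap (hZ x hx ⟨c, hc, rfl⟩)
    have h2 : b * x⁻¹ * b⁻¹ * x ∈ N := by
      have h := h1 b⁻¹ (inv_mem hb)
      simpa using h
    have h3 : ⁅b,x⁆ = x * (b * x⁻¹ * b⁻¹ * x)⁻¹ * x⁻¹ := by group
    rw [h3]
    exact hNnormal.conj_mem _ (inv_mem h2) x
  -- key: commutators [A, x] are central for small x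
  have hkey : ∀ x ∈ S, ∀ a ∈ A, ⁅a, x⁆ ∈ Subgroup.center G := by
    intro x hx
    by_cases hxc : x ∈ Subgroup.center G
    · intro a ha
      rw [commutatorElement_eq_one_iff_commute.mpr (Subgroup.mem_center_iff.mp hxc a)]
      exact one_mem _
    · refine key_lemma A hA x ?_ (hN x hx)
      intro u hu
      rw [← classCard_eq_index, ← classCard_eq_index]
      exact IsSmall.le_classCard hx hxc hu
  -- Step 1: commutators of small elements centralize A
  have hstep1 : ∀ s ∈ S, ∀ t ∈ S, ⁅s, t⁆ ∈ N := by
    intro s hs t ht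
    rw [hNdef, Subgroup.mem_centralizer_iff]
    exact conj_comm_of_key A hA (hkey s hs) (hkey t ht)
  -- Step 2: ⁅M, M⁆ ≤ N
  haveI : N.Normal := hNnormal
  have hMM : ⁅M, M⁆ ≤ N := by
    set π := QuotientGroup.mk' N with hπdef
    have hcommS : ∀ s ∈ S, ∀ t ∈ S, Commute (π s) (π t) := by
      intro s hs t ht
      have h1 : π ⁅s, t⁆ = 1 := (QuotientGroup.eq_one_iff _).mpr (hstep1 s hs t ht)
      rw [map_commutatorElement] at h1
      exact commutatorElement_eq_one_iff_commute.mp h1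
    have h1 : ∀ t ∈ S, M ≤ (Subgroup.centralizer {π t}).comap π := by
      intro t ht
      rw [hMS]
      refine (Subgroup.closure_le _).mpr ?_
      intro s hs
      rw [SetLike.mem_coe, Subgroup.mem_comap, Subgroup.mem_centralizer_singleton_iff]
      exact hcommS s hs t ht
    have hMcomm : ∀ m ∈ M, ∀ n ∈ M, Commute (π m) (π n) := by
      intro m hm n hn
      have h2 : M ≤ (Subgroup.centralizer {π m}).comap π := by
        rw [hMS]
        refine (Subgroup.closure_le _).mpr ?_
        intro t ht
        rw [SetLike.mem_coe, Subgroup.mem_comap, Subgroup.mem_centralizer_singleton_iff]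
        have h5 : π m ∈ Subgroup.centralizer {π t} := Subgroup.mem_comap.mp (h1 t ht hm)
        exact (Subgroup.mem_centralizer_singleton_iff.mp h5).symm
      exact (Subgroup.mem_centralizer_singleton_iff.mp
        (Subgroup.mem_comap.mp (h2 hn))).symm
    rw [Subgroup.commutator_le]
    intro g₁ hg₁ g₂ hg₂
    have h3 : π ⁅g₁, g₂⁆ = 1 := by
      rw [map_commutatorElement]
      exact commutatorElement_eq_one_iff_commute.mpr (hMcomm g₁ hg₁ g₂ hg₂)
    exact (QuotientGroup.eq_one_iff _).mp h3
  -- Step 3: ⁅N, M⁆ ≤ Z(G)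
  have hNM : ⁅N, M⁆ ≤ Subgroup.center G := by
    set π := QuotientGroup.mk' (Subgroup.center G) with hπdef
    rw [Subgroup.commutator_le]
    intro z hz m hm
    have h2 : M ≤ (Subgroup.centralizer {π z}).comap π := by
      rw [hMS]
      refine (Subgroup.closure_le _).mpr ?_
      intro s hs
      rw [SetLike.mem_coe, Subgroup.mem_comap, Subgroup.mem_centralizer_singleton_iff]
      have h1 : π ⁅z, s⁆ = 1 := (QuotientGroup.eq_one_iff _).mpr (hkey s hs z (hC hz))
      rw [map_commutatorElement] at h1
      exact (commutatorElement_eq_one_iff_commute.mp h1).symm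
    have h3 : Commute (π z) (π m) :=
      ((Subgroup.mem_centralizer_singleton_iff.mp (Subgroup.mem_comap.mp (h2 hm)))).symm
    have h4 : π ⁅z, m⁆ = 1 := by
      rw [map_commutatorElement]
      exact commutatorElement_eq_one_iff_commute.mpr h3
    exact (QuotientGroup.eq_one_iff _).mp h4
  -- assemble: third term of the lower central series of M is central, fourth trivial
  have hL2 : ⁅⁅M, M⁆, M⁆ ≤ Subgroup.center G :=
    le_trans (Subgroup.commutator_mono hMM le_rfl) hNM
  have hL3 : ⁅⁅⁅M, M⁆, M⁆, M⁆ = ⊥ := by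
    rw [eq_bot_iff, Subgroup.commutator_le]
    intro g hg m hm
    rw [Subgroup.mem_bot]
    exact commutatorElement_eq_one_iff_commute.mpr
      (Subgroup.mem_center_iff.mp (hL2 hg) m).symm
  have hmap3 : Subgroup.map M.subtype ((⊤ : Subgroup ↥M).lowerCentralSeries 3) = ⁅⁅⁅M, M⁆, M⁆, M⁆ := by
    have h0 : Subgroup.map M.subtype ((⊤ : Subgroup ↥M).lowerCentralSeries 0) = M := by
      rw [lowerCentralSeries_zero, ← MonoidHom.range_eq_map, Subgroup.range_subtype]
    have hsucc : ∀ n, Subgroup.map M.subtype ((⊤ : Subgroup ↥M).lowerCentralSeries (n + 1)) =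
        ⁅Subgroup.map M.subtype ((⊤ : Subgroup ↥M).lowerCentralSeries n), M⁆ := by
      intro n
      show Subgroup.map M.subtype ⁅(⊤ : Subgroup ↥M).lowerCentralSeries n, ⊤⁆ =
        ⁅Subgroup.map M.subtype ((⊤ : Subgroup ↥M).lowerCentralSeries n), M⁆
      rw [Subgroup.map_commutator, ← MonoidHom.range_eq_map, Subgroup.range_subtype]
    rw [hsucc 2, hsucc 1, hsucc 0, h0]
  have hlcs3 : (⊤ : Subgroup ↥M).lowerCentralSeries 3 = ⊥ := by
    have h5 : Subgroup.map M.subtype ((⊤ : Subgroup ↥M).lowerCentralSeries 3) = ⊥ := by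
      rw [hmap3]; exact hL3
    rwa [Subgroup.map_eq_bot_iff, Subgroup.ker_subtype, le_bot_iff] at h5
  exact ⟨Subgroup.nilpotent_iff_lowerCentralSeries.mpr ⟨3, hlcs3⟩, hlcs3⟩
end

section
/- Let G be a finite group such that C_G(F(G)) ≤ F(G) and such that [x, F(G)] is a normal subset of F(G) for every small element x of G. Then M(G) is nilpotent of nilpotency class at most 2. -/
section Basic
variable {G : Type*} [Group G]

lemma conjugatesOf_eq_image (y : G) :
    conjugatesOf y = (fun h => h * y * h⁻¹) '' Set.univ := by
  ext b
  simp only [conjugatesOf, Set.mem_setOf_eq, Set.image_univ, Set.mem_range, isConj_iff]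

lemma classCard_pos [Finite G] (x : G) : 0 < classCard x := by
  have : x ∈ conjugatesOf x := IsConj.refl x
  have : Nonempty (conjugatesOf x) := ⟨⟨x, this⟩⟩
  exact Nat.card_pos

lemma classCard_one : classCard (1 : G) = 1 := by
  have h : conjugatesOf (1 : G) = {1} := by
    ext b
    simp only [conjugatesOf, Set.mem_setOf_eq, isConj_iff, Set.mem_singleton_iff]
    constructor
    · rintro ⟨c, rfl⟩; group
    · rintro rfl; exact ⟨1, by group⟩
  rw [classCard, h, Nat.card_coe_set_eq, Set.ncard_singleton]

lemma mem_center_of_classCard_eq_one [Finite G] {x : G} (h : classCard x = 1) :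
    x ∈ Subgroup.center G := by
  rw [classCard, Nat.card_coe_set_eq] at h
  obtain ⟨a, ha⟩ := Set.ncard_eq_one.mp h
  have hx : x ∈ conjugatesOf x := IsConj.refl x
  rw [ha, Set.mem_singleton_iff] at hx
  rw [Subgroup.mem_center_iff]
  intro g
  have hg : g * x * g⁻¹ ∈ conjugatesOf x := isConj_iff.mpr ⟨g, rfl⟩
  rw [ha, Set.mem_singleton_iff, ← hx] at hg
  calc g * x = (g * x * g⁻¹) * g := by group
  _ = x * g := by rw [hg]

lemma mem_center_of_small_lt [Finite G] {x g : G} (hx : IsSmall x)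
    (h : classCard g < classCard x) : g ∈ Subgroup.center G := by
  have h1 : (1 : ℕ) ∈ {n : ℕ | (∃ g : G, classCard g = n) ∧ n < classCard x} :=
    ⟨⟨1, classCard_one⟩, lt_of_le_of_lt (classCard_pos g) h⟩
  have h2 : classCard g ∈ {n : ℕ | (∃ g : G, classCard g = n) ∧ n < classCard x} :=
    ⟨⟨g, rfl⟩, h⟩
  exact mem_center_of_classCard_eq_one (hx h2 h1)

lemma classCard_conj (g x : G) : classCard (g * x * g⁻¹) = classCard x := by
  have : conjugatesOf (g * x * g⁻¹) = conjugatesOf x := by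
    ext b
    simp only [conjugatesOf, Set.mem_setOf_eq]
    have hc : IsConj x (g * x * g⁻¹) := isConj_iff.mpr ⟨g, rfl⟩
    exact ⟨fun h => hc.trans h, fun h => hc.symm.trans h⟩
  rw [classCard, this, classCard]

lemma isSmall_conj {x : G} (hx : IsSmall x) (g : G) : IsSmall (g * x * g⁻¹) := by
  unfold IsSmall at *
  rw [classCard_conj]
  exact hx

/-- Orbit–stabilizer for conjugation by a subgroup. -/
lemma card_conj_orbit_mul (H : Subgroup G) (y : G) :
    Nat.card ((fun h => h * y * h⁻¹) '' (H : Set G)) *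
      Nat.card ((Subgroup.centralizer {y}).subgroupOf H) = Nat.card H := by
  classical
  rw [Subgroup.card_eq_card_quotient_mul_card_subgroup
    ((Subgroup.centralizer {y}).subgroupOf H)]
  congr 1
  refine (Nat.card_congr (Equiv.ofBijective
    (f := fun (q : H ⧸ (Subgroup.centralizer {y}).subgroupOf H) =>
      Quotient.liftOn' q
        (fun h => (⟨(h : G) * y * (h : G)⁻¹, ⟨(h : G), h.2, rfl⟩⟩ :
          ((fun h => h * y * h⁻¹) '' (H : Set G))))
        (fun a b hab => ?_)) ⟨?_, ?_⟩)).symm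
  · have hab' : ((a : G)⁻¹ * b) ∈ Subgroup.centralizer ({y} : Set G) := by
      have := QuotientGroup.leftRel_apply.mp hab
      rwa [Subgroup.mem_subgroupOf] at this
    have hcomm : ((a : G)⁻¹ * b) * y = y * ((a : G)⁻¹ * b) :=
      Subgroup.mem_centralizer_singleton_iff.mp hab'
    refine Subtype.ext ?_
    show (a : G) * y * (a : G)⁻¹ = (b : G) * y * (b : G)⁻¹
    have : (b : G) = (a : G) * (((a : G)⁻¹ * b)) := by group
    rw [this]
    calc (a:G) * y * (a:G)⁻¹
        = (a:G) * ((((a:G)⁻¹ * b) * y) * (((a:G)⁻¹*b))⁻¹) * (a:G)⁻¹ := by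
          rw [hcomm]; group
      _ = (a:G) * ((a:G)⁻¹ * b) * y * ((a:G) * ((a:G)⁻¹*b))⁻¹ := by group
  · intro q₁ q₂
    refine Quotient.inductionOn₂' q₁ q₂ (fun a b h => ?_)
    have h' : (a : G) * y * (a : G)⁻¹ = (b : G) * y * (b : G)⁻¹ :=
      congrArg Subtype.val h
    refine Quotient.sound' (QuotientGroup.leftRel_apply.mpr ?_)
    rw [Subgroup.mem_subgroupOf]
    refine Subgroup.mem_centralizer_singleton_iff.mpr ?_
    have : ((a : G)⁻¹ * b) * y * ((a:G)⁻¹ * b)⁻¹ = y := by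
      calc ((a : G)⁻¹ * b) * y * ((a:G)⁻¹ * b)⁻¹
          = (a:G)⁻¹ * ((b:G) * y * (b:G)⁻¹) * a := by group
        _ = (a:G)⁻¹ * ((a:G) * y * (a:G)⁻¹) * a := by rw [h']
        _ = y := by group
    calc ((a : G)⁻¹ * b) * y = (((a : G)⁻¹ * b) * y * ((a:G)⁻¹ * b)⁻¹) * ((a:G)⁻¹ * b) := by group
      _ = y * ((a:G)⁻¹ * b) := by rw [this]
  · rintro ⟨w, g, hg, rfl⟩
    exact ⟨Quotient.mk'' ⟨g, hg⟩, rfl⟩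

lemma card_subgroupOf_of_le {K H : Subgroup G} (h : K ≤ H) :
    Nat.card (K.subgroupOf H) = Nat.card K :=
  Nat.card_congr (Subgroup.subgroupOfEquivOfLe h).toEquiv

lemma card_subgroupOf_le [Finite G] (K H : Subgroup G) :
    Nat.card (K.subgroupOf H) ≤ Nat.card K := by
  refine Nat.card_le_card_of_injective
    (fun g => (⟨(g : H), by have := g.2; rwa [Subgroup.mem_subgroupOf] at this⟩ : K)) ?_
  intro a b hab
  have : ((a : H) : G) = ((b : H) : G) := congrArg (fun (t : K) => (t : G)) hab
  exact Subtype.ext (Subtype.ext this)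

lemma classCard_mul_card_centralizer [Finite G] (y : G) :
    classCard y * Nat.card (Subgroup.centralizer ({y} : Set G)) = Nat.card G := by
  have := card_conj_orbit_mul (⊤ : Subgroup G) y
  rw [card_subgroupOf_of_le le_top, Subgroup.card_top] at this
  have himg : (fun h => h * y * h⁻¹) '' ((⊤ : Subgroup G) : Set G) = conjugatesOf y := by
    rw [conjugatesOf_eq_image, Subgroup.coe_top]
  rw [himg] at this
  rw [classCard]
  exact this
end Basic

section Fitting
variable {G : Type*} [Group G]

lemma normal_nilpotent_le_fitting {H : Subgroup G} (h1 : H.Normal)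
    (h2 : Group.IsNilpotent ↥H) : H ≤ fittingSubgroup G := by
  have hmem : H ∈ {H : Subgroup G | H.Normal ∧ Group.IsNilpotent ↥H} := ⟨h1, h2⟩
  exact le_iSup₂ (f := fun (K : Subgroup G)
    (_ : K ∈ {H : Subgroup G | H.Normal ∧ Group.IsNilpotent ↥H}) => K) H hmem

lemma center_le_fitting : Subgroup.center G ≤ fittingSubgroup G :=
  normal_nilpotent_le_fitting inferInstance (by open scoped IsMulCommutative in infer_instance)

lemma map_conj_self_of_normal {H : Subgroup G} (hn : H.Normal) (g : G) :
    H.map (MulAut.conj g).toMonoidHom = H := by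
  ext x
  simp only [Subgroup.mem_map, MulEquiv.toMonoidHom_eq_coe, MonoidHom.coe_coe,
    MulAut.conj_apply]
  constructor
  · rintro ⟨y, hy, rfl⟩
    exact hn.conj_mem y hy g
  · intro hx
    exact ⟨g⁻¹ * x * g, by simpa using hn.conj_mem x hx g⁻¹, by group⟩

lemma fitting_normal : (fittingSubgroup G).Normal := by
  constructor
  intro n hn g
  have hmap : (fittingSubgroup G).map (MulAut.conj g).toMonoidHom = fittingSubgroup G := by
    unfold fittingSubgroup
    rw [Subgroup.map_iSup]
    refine iSup_congr (fun H => ?_)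
    rw [Subgroup.map_iSup]
    refine iSup_congr (fun hH => ?_)
    exact map_conj_self_of_normal hH.1 g
  rw [← hmap]
  exact ⟨n, hn, by simp [MulAut.conj_apply]⟩

end Fitting

section Core
open scoped Pointwise
variable {G : Type*} [Group G] [Finite G]

lemma core_comm_central {x : G}
    (hx : IsSmall x)
    (hK : IsNormalSubsetOf (commSet x (fittingSubgroup G : Set G))
      (fittingSubgroup G : Set G)) :
    ∀ f ∈ fittingSubgroup G, x⁻¹ * f⁻¹ * x * f ∈ Subgroup.center G := by
  haveI hFn : (fittingSubgroup G).Normal := fitting_normal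
  set F := fittingSubgroup G with hFdef
  set Z := Subgroup.center G with hZdef
  set K : Set G := commSet x (F : Set G) with hKdef
  have hone : (1 : G) ∈ K := ⟨1, one_mem F, by group⟩
  have hFK : ∀ k ∈ F, ∀ s ∈ K, k * s * k⁻¹ ∈ K := by
    intro j hj s hs
    have himg := hK j⁻¹ (inv_mem hj)
    rw [← himg]
    exact ⟨s, hs, by group⟩
  have hCK : ∀ c ∈ Subgroup.centralizer ({x} : Set G), ∀ s ∈ K, c * s * c⁻¹ ∈ K := by
    rintro c hc s ⟨g, hg, rfl⟩
    have hcx : c * x = x * c := Subgroup.mem_centralizer_singleton_iff.mp hc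
    have hx1 : c * x * c⁻¹ = x := by rw [hcx]; group
    have hx2 : c * x⁻¹ * c⁻¹ = x⁻¹ := by
      have h' : (c * x * c⁻¹)⁻¹ = c * x⁻¹ * c⁻¹ := by group
      rw [← h', hx1]
    refine ⟨c * g * c⁻¹, hFn.conj_mem g hg c, ?_⟩
    have e1 : c * (x⁻¹ * g⁻¹ * x * g) * c⁻¹
        = (c * x⁻¹ * c⁻¹) * (c * g * c⁻¹)⁻¹ * (c * x * c⁻¹) * (c * g * c⁻¹) := by group
    rw [e1, hx1, hx2]
  set C := Subgroup.centralizer ({x} : Set G) with hCdef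
  set H := F ⊔ C with hHdef
  have hsplit : ∀ h ∈ H, ∃ c ∈ C, ∃ g ∈ F, c * g = h := by
    intro h hh
    have hh2 : h ∈ F ⊔ C := hh
    have hh' : h ∈ C ⊔ F := by rwa [sup_comm] at hh2
    have : h ∈ ((C : Set G) * (F : Set G)) := by
      rw [← Subgroup.mul_normal C F]
      exact hh'
    exact Set.mem_mul.mp this
  have hHK : ∀ h ∈ H, ∀ s ∈ K, h * s * h⁻¹ ∈ K := by
    intro h hh s hs
    obtain ⟨c, hc, g, hg, rfl⟩ := hsplit h hh
    have e : (c * g) * s * (c * g)⁻¹ = c * (g * s * g⁻¹) * c⁻¹ := by group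
    rw [e]
    exact hCK c hc _ (hFK g hg s hs)
  intro f hf
  by_cases hcx1 : classCard x = 1
  · have hxc := mem_center_of_classCard_eq_one hcx1
    have hcomm : f⁻¹ * x = x * f⁻¹ := Subgroup.mem_center_iff.mp hxc f⁻¹
    have hone' : x⁻¹ * f⁻¹ * x * f = 1 := by
      calc x⁻¹ * f⁻¹ * x * f = x⁻¹ * (f⁻¹ * x) * f := by group
      _ = x⁻¹ * (x * f⁻¹) * f := by rw [hcomm]
      _ = 1 := by group
    rw [hone']
    exact one_mem Z
  · set k := x⁻¹ * f⁻¹ * x * f with hkdef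
    have hkK : k ∈ K := ⟨f, hf, rfl⟩
    by_cases hk1 : k = 1
    · rw [hk1]; exact one_mem Z
    set b := Nat.card K with hbdef
    have hKfin : K.Finite := Set.toFinite K
    have hbn : b = K.ncard := Nat.card_coe_set_eq K
    have hb2 : 2 ≤ b := by
      have h2 : 1 < K.ncard := (Set.one_lt_ncard hKfin).mpr ⟨k, hkK, 1, hone, hk1⟩
      omega
    have hOx : (fun h => h * x * h⁻¹) '' (H : Set G) = (fun s => x * s) '' K := by
      ext y
      constructor
      · rintro ⟨h, hh, rfl⟩
        obtain ⟨c, hc, g, hg, rfl⟩ := hsplit h hh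
        have hs1 : x⁻¹ * (g⁻¹)⁻¹ * x * g⁻¹ ∈ K := ⟨g⁻¹, inv_mem hg, rfl⟩
        have hs1' : x⁻¹ * g * x * g⁻¹ ∈ K := by
          have e : x⁻¹ * (g⁻¹)⁻¹ * x * g⁻¹ = x⁻¹ * g * x * g⁻¹ := by group
          rwa [e] at hs1
        refine ⟨c * (x⁻¹ * g * x * g⁻¹) * c⁻¹, hCK c hc _ hs1', ?_⟩
        have hcx : c * x = x * c := Subgroup.mem_centralizer_singleton_iff.mp hc
        calc x * (c * (x⁻¹ * g * x * g⁻¹) * c⁻¹)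
            = (x * c) * (x⁻¹ * g * x * g⁻¹ * c⁻¹) := by group
          _ = (c * x) * (x⁻¹ * g * x * g⁻¹ * c⁻¹) := by rw [hcx]
          _ = (c * g) * x * (c * g)⁻¹ := by group
      · rintro ⟨s, ⟨g, hg, rfl⟩, rfl⟩
        refine ⟨g⁻¹, (le_sup_left : F ≤ H) (inv_mem hg), ?_⟩
        group
    have hcOx : Nat.card ((fun h => h * x * h⁻¹) '' (H : Set G)) = b := by
      rw [hOx, Nat.card_coe_set_eq,
        Set.ncard_image_of_injective K (mul_right_injective x), hbn]
    have h1 : b * Nat.card C = Nat.card H := by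
      have h' := card_conj_orbit_mul H x
      rwa [hcOx, card_subgroupOf_of_le (le_sup_right : C ≤ H)] at h'
    have hOk : (fun h => h * k * h⁻¹) '' (H : Set G) ⊆ K \ {1} := by
      rintro y ⟨h, hh, rfl⟩
      refine ⟨hHK h hh k hkK, ?_⟩
      simp only [Set.mem_singleton_iff]
      intro hcon
      refine hk1 ?_
      have e : k = h⁻¹ * (h * k * h⁻¹) * h := by group
      rw [hcon] at e
      rw [e]; group
    have hcOk : Nat.card ((fun h => h * k * h⁻¹) '' (H : Set G)) ≤ b - 1 := by
      rw [Nat.card_coe_set_eq]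
      have h2 := Set.ncard_le_ncard hOk (hKfin.diff (t := {1}))
      rwa [Set.ncard_diff_singleton_of_mem hone, ← hbn] at h2
    set Ck := Subgroup.centralizer ({k} : Set G) with hCkdef
    have h3 := card_conj_orbit_mul H k
    have hcs_le : Nat.card (Ck.subgroupOf H) ≤ Nat.card Ck := card_subgroupOf_le Ck H
    have hCpos : 0 < Nat.card C := Nat.card_pos
    have hlt : Nat.card C < Nat.card (Ck.subgroupOf H) := by
      by_contra hle
      push_neg at hle
      have hup : Nat.card H ≤ (b - 1) * Nat.card C := by
        rw [← h3]
        exact Nat.mul_le_mul hcOk hle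
      rw [← h1] at hup
      have : b ≤ b - 1 := Nat.le_of_mul_le_mul_right hup hCpos
      omega
    have hltCk : Nat.card C < Nat.card Ck := lt_of_lt_of_le hlt hcs_le
    have hGx := classCard_mul_card_centralizer x
    have hGk := classCard_mul_card_centralizer k
    have hxpos : 0 < classCard x := classCard_pos x
    have hfin : classCard k < classCard x := by
      have hmul : classCard k * Nat.card Ck < classCard x * Nat.card Ck := by
        rw [hGk, ← hGx]
        exact mul_lt_mul_of_pos_left hltCk hxpos
      exact Nat.lt_of_mul_lt_mul_right hmul
    exact mem_center_of_small_lt hx hfin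

end Core

section Main
open scoped commutatorElement
variable (G : Type*) [Group G]

/-- Elements acting on the Fitting subgroup by central multiplications. -/
def SP : Subgroup G where
  carrier := {g | ∀ f ∈ fittingSubgroup G, ∃ z ∈ Subgroup.center G, g * f * g⁻¹ = z * f}
  one_mem' := fun f _ => ⟨1, one_mem _, by group⟩
  mul_mem' := by
    intro a b ha hb f hf
    obtain ⟨z₂, hz₂, e₂⟩ := hb f hf
    obtain ⟨z₁, hz₁, e₁⟩ := ha f hf
    refine ⟨z₂ * z₁, mul_mem hz₂ hz₁, ?_⟩
    calc (a*b)*f*(a*b)⁻¹ = a*(b*f*b⁻¹)*a⁻¹ := by group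
    _ = a*(z₂*f)*a⁻¹ := by rw [e₂]
    _ = (a*z₂)*f*a⁻¹ := by group
    _ = (z₂*a)*f*a⁻¹ := by rw [Subgroup.mem_center_iff.mp hz₂ a]
    _ = z₂*(a*f*a⁻¹) := by group
    _ = z₂*(z₁*f) := by rw [e₁]
    _ = (z₂*z₁)*f := by group
  inv_mem' := by
    intro a ha f hf
    haveI hFn : (fittingSubgroup G).Normal := fitting_normal
    have hf' : a⁻¹ * f * a ∈ fittingSubgroup G := by
      have h' := hFn.conj_mem f hf a⁻¹
      rwa [inv_inv] at h'
    obtain ⟨z, hz, e⟩ := ha (a⁻¹ * f * a) hf'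
    have e2 : f = z * (a⁻¹ * f * a) := by rw [← e]; group
    refine ⟨z⁻¹, inv_mem hz, ?_⟩
    rw [inv_inv]
    exact eq_inv_mul_iff_mul_eq.mpr e2.symm

variable {G}

lemma mem_SP {g : G} : g ∈ SP G ↔
    ∀ f ∈ fittingSubgroup G, ∃ z ∈ Subgroup.center G, g * f * g⁻¹ = z * f := Iff.rfl

lemma small_mem_SP [Finite G] {x : G} (hx : IsSmall x)
    (hK : IsNormalSubsetOf (commSet x (fittingSubgroup G : Set G))
      (fittingSubgroup G : Set G)) : x ∈ SP G := by
  rw [mem_SP]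
  intro f hf
  haveI hFn : (fittingSubgroup G).Normal := fitting_normal
  have hw := core_comm_central hx hK (x * f * x⁻¹) (hFn.conj_mem f hf x)
  have e : x⁻¹ * (x*f*x⁻¹)⁻¹ * x * (x*f*x⁻¹) = f⁻¹*x*f*x⁻¹ := by group
  rw [e] at hw
  refine ⟨f⁻¹*x*f*x⁻¹, hw, ?_⟩
  have hc := Subgroup.mem_center_iff.mp hw f
  calc x*f*x⁻¹ = f * (f⁻¹*x*f*x⁻¹) := by group
  _ = (f⁻¹*x*f*x⁻¹) * f := hc

lemma SP_conj {g : G} (hg : g ∈ SP G) :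
    ∀ f ∈ fittingSubgroup G, ∃ z ∈ Subgroup.center G, f * g * f⁻¹ = g * z := by
  intro f hf
  obtain ⟨z, hz, e⟩ := (mem_SP.mp (inv_mem hg)) f hf
  rw [inv_inv] at e
  refine ⟨z, hz, ?_⟩
  have e3 : f * g = g * (z * f) := by rw [← e]; group
  calc f*g*f⁻¹ = (f*g)*f⁻¹ := by group
  _ = (g*(z*f))*f⁻¹ := by rw [e3]
  _ = g*z := by group

lemma commutator_mem_centralizer {s t : G} (hs : s ∈ SP G) (ht : t ∈ SP G) :
    ⁅s, t⁆ ∈ Subgroup.centralizer ((fittingSubgroup G : Set G)) := by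
  rw [Subgroup.mem_centralizer_iff]
  intro f hf
  obtain ⟨z₁, hz₁, e₁⟩ := SP_conj hs f hf
  obtain ⟨z₂, hz₂, e₂⟩ := SP_conj ht f hf
  have c1 : ∀ a : G, a * z₁ = z₁ * a := fun a => Subgroup.mem_center_iff.mp hz₁ a
  have c2 : ∀ a : G, a * z₂ = z₂ * a := fun a => Subgroup.mem_center_iff.mp hz₂ a
  have hcc : ∀ (z a c : G), (∀ u : G, u * z = z * u) → (a*z)*c*(a*z)⁻¹ = a*c*a⁻¹ := by
    intro z a c hzc
    have e' : (a*z)*c*(a*z)⁻¹ = a*(z*c*z⁻¹)*a⁻¹ := by group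
    have e'' : z*c*z⁻¹ = c := by rw [← hzc c]; group
    rw [e', e'']
  have key : f * (s*t*s⁻¹*t⁻¹) * f⁻¹ = s*t*s⁻¹*t⁻¹ := by
    have e : f*(s*t*s⁻¹*t⁻¹)*f⁻¹ = (f*s*f⁻¹)*(f*t*f⁻¹)*(f*s*f⁻¹)⁻¹*(f*t*f⁻¹)⁻¹ := by group
    rw [e, e₁, e₂]
    calc (s*z₁)*(t*z₂)*(s*z₁)⁻¹*(t*z₂)⁻¹
        = ((s*z₁)*(t*z₂)*(s*z₁)⁻¹)*(t*z₂)⁻¹ := by group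
      _ = (s*(t*z₂)*s⁻¹)*(t*z₂)⁻¹ := by rw [hcc z₁ s (t*z₂) c1]
      _ = s*t*(z₂*s⁻¹)*(z₂⁻¹*t⁻¹) := by group
      _ = s*t*(s⁻¹*z₂)*(z₂⁻¹*t⁻¹) := by rw [← c2 s⁻¹]
      _ = s*t*s⁻¹*t⁻¹ := by group
  rw [commutatorElement_def]
  calc f * (s*t*s⁻¹*t⁻¹) = (f*(s*t*s⁻¹*t⁻¹)*f⁻¹)*f := by group
  _ = (s*t*s⁻¹*t⁻¹)*f := by rw [key]

lemma comm_fitting_mem_center {m d : G} (hm : m ∈ SP G)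
    (hd : d ∈ fittingSubgroup G) : ⁅d, m⁆ ∈ Subgroup.center G := by
  obtain ⟨z, hz, e⟩ := mem_SP.mp hm d hd
  have h1 : ⁅m, d⁆ = z := by
    rw [commutatorElement_def, e]
    group
  have h2 : ⁅m, d⁆ ∈ Subgroup.center G := h1 ▸ hz
  rw [← commutatorElement_inv]
  exact inv_mem h2

lemma smallGen_normal : (smallGen G).Normal := by
  constructor
  intro n hn g
  have himg : (MulAut.conj g).toMonoidHom '' {x : G | IsSmall x} = {x : G | IsSmall x} := by
    ext y
    simp only [Set.mem_image, Set.mem_setOf_eq, MulEquiv.toMonoidHom_eq_coe,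
      MonoidHom.coe_coe, MulAut.conj_apply]
    constructor
    · rintro ⟨w, hw, rfl⟩
      exact isSmall_conj hw g
    · intro hy
      refine ⟨g⁻¹ * y * g, ?_, by group⟩
      have := isSmall_conj hy g⁻¹
      rwa [inv_inv] at this
  have h2 : (smallGen G).map (MulAut.conj g).toMonoidHom = smallGen G := by
    unfold smallGen
    rw [MonoidHom.map_closure, himg]
  rw [← h2]
  exact ⟨n, hn, by simp [MulAut.conj_apply]⟩

end Main

/-- If `C_G(F(G)) ≤ F(G)` and `[x, F(G)]` is a normal subset of `F(G)` for every small
element `x` of the finite group `G`, then `M(G)` is nilpotent of class at most `2`. -/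
theorem stmt_3 {G : Type*} [Group G] [Finite G]
    (hC : Subgroup.centralizer (fittingSubgroup G : Set G) ≤ fittingSubgroup G)
    (hns : ∀ x : G, IsSmall x →
      IsNormalSubsetOf (commSet x (fittingSubgroup G : Set G)) (fittingSubgroup G : Set G)) :
    Group.IsNilpotent ↥(smallGen G) ∧ Subgroup.lowerCentralSeries (⊤ : Subgroup ↥(smallGen G)) 2 = ⊥ := by
  have hM_SP : smallGen G ≤ SP G :=
    (Subgroup.closure_le (SP G)).mpr (fun x hx => small_mem_SP hx (hns x hx))
  have hD_cent : ⁅smallGen G, smallGen G⁆ ≤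
      Subgroup.centralizer (fittingSubgroup G : Set G) :=
    Subgroup.commutator_le.mpr fun s hs t ht =>
      commutator_mem_centralizer (hM_SP hs) (hM_SP ht)
  have hD_F : ⁅smallGen G, smallGen G⁆ ≤ fittingSubgroup G := hD_cent.trans hC
  have hE_Z : ⁅⁅smallGen G, smallGen G⁆, smallGen G⁆ ≤ Subgroup.center G :=
    Subgroup.commutator_le.mpr fun d hd m hm =>
      comm_fitting_mem_center (hM_SP hm) (hD_F hd)
  have hlcs3 : ⁅⁅⁅smallGen G, smallGen G⁆, smallGen G⁆, smallGen G⁆ = ⊥ := by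
    rw [eq_bot_iff]
    refine Subgroup.commutator_le.mpr fun z hz m hm => ?_
    rw [Subgroup.mem_bot, commutatorElement_eq_one_iff_mul_comm]
    exact (Subgroup.mem_center_iff.mp (hE_Z hz) m).symm
  have h0 : (Subgroup.lowerCentralSeries (⊤ : Subgroup ↥(smallGen G)) 0).map (smallGen G).subtype = smallGen G := by
    rw [Subgroup.lowerCentralSeries_zero, ← MonoidHom.range_eq_map, Subgroup.range_subtype]
  have hstep : ∀ n, (Subgroup.lowerCentralSeries (⊤ : Subgroup ↥(smallGen G)) (n+1)).map (smallGen G).subtype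
      = ⁅(Subgroup.lowerCentralSeries (⊤ : Subgroup ↥(smallGen G)) n).map (smallGen G).subtype, smallGen G⁆ := by
    intro n
    have hdef : Subgroup.lowerCentralSeries (⊤ : Subgroup ↥(smallGen G)) (n+1)
        = ⁅Subgroup.lowerCentralSeries (⊤ : Subgroup ↥(smallGen G)) n, ⊤⁆ := rfl
    rw [hdef, Subgroup.map_commutator, ← MonoidHom.range_eq_map, Subgroup.range_subtype]
  have h1 : (Subgroup.lowerCentralSeries (⊤ : Subgroup ↥(smallGen G)) 1).map (smallGen G).subtype
      = ⁅smallGen G, smallGen G⁆ := by rw [hstep 0, h0]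
  have h2 : (Subgroup.lowerCentralSeries (⊤ : Subgroup ↥(smallGen G)) 2).map (smallGen G).subtype
      = ⁅⁅smallGen G, smallGen G⁆, smallGen G⁆ := by rw [hstep 1, h1]
  have h3 : (Subgroup.lowerCentralSeries (⊤ : Subgroup ↥(smallGen G)) 3).map (smallGen G).subtype = ⊥ := by
    rw [hstep 2, h2, hlcs3]
  have hlcsM3 : Subgroup.lowerCentralSeries (⊤ : Subgroup ↥(smallGen G)) 3 = ⊥ := by
    have hb := (Subgroup.map_eq_bot_iff _).mp h3
    rw [Subgroup.ker_subtype] at hb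
    exact le_bot_iff.mp hb
  have hnil : Group.IsNilpotent ↥(smallGen G) :=
    Subgroup.nilpotent_iff_lowerCentralSeries.mpr ⟨3, hlcsM3⟩
  have hMF : smallGen G ≤ fittingSubgroup G :=
    normal_nilpotent_le_fitting smallGen_normal hnil
  have hlcs2' : ⁅⁅smallGen G, smallGen G⁆, smallGen G⁆ = ⊥ := by
    rw [eq_bot_iff]
    refine Subgroup.commutator_le.mpr fun d hd m hm => ?_
    rw [Subgroup.mem_bot, commutatorElement_eq_one_iff_mul_comm]
    exact (Subgroup.mem_centralizer_iff.mp (hD_cent hd) m (hMF hm)).symm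
  have h2' : (Subgroup.lowerCentralSeries (⊤ : Subgroup ↥(smallGen G)) 2).map (smallGen G).subtype = ⊥ := by
    rw [h2, hlcs2']
  have hlcsM2 : Subgroup.lowerCentralSeries (⊤ : Subgroup ↥(smallGen G)) 2 = ⊥ := by
    have hb := (Subgroup.map_eq_bot_iff _).mp h2'
    rw [Subgroup.ker_subtype] at hb
    exact le_bot_iff.mp hb
  exact ⟨hnil, hlcsM2⟩
end
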